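/- arXiv:1209.4239 — 5 statements merged into one kernel-verified Lean document; each statement's English description precedes it below -/
import Mathlib

section
/- For every nonzero integer q, the degree of the Riley polynomial φ_q(u) equals 2q−1 if q > 0 and 2|q| if q < 0, and its leading coefficient is ±1. -/
open Polynomial

/-- `λ₊(u) = ((u²+2) + r)/2` where `r` is a square root of `u⁴+4u²`. -/
noncomputable def lamp (u r : ℂ) : ℂ := (u ^ 2 + 2 + r) / 2

/-- `λ₋(u) = ((u²+2) - r)/2` where `r` is a square root of `u⁴+4u²`. -/
noncomputable def lamm (u r : ℂ) : ℂ := (u ^ 2 + 2 - r) / 2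

/-- `P` is the Riley polynomial `φ_q`, characterized by
`(λ₊ - λ₋)·φ_q(u) = (1-u)(λ₊^q - λ₋^q) - (λ₊^{q-1} - λ₋^{q-1})`. -/
def RileyRel (q : ℤ) (P : Polynomial ℤ) : Prop :=
  ∀ u r : ℂ, r ^ 2 = u ^ 4 + 4 * u ^ 2 →
    (lamp u r - lamm u r) * (Polynomial.aeval u P : ℂ) =
      (1 - u) * ((lamp u r) ^ q - (lamm u r) ^ q) -
        ((lamp u r) ^ (q - 1) - (lamm u r) ^ (q - 1))

open Complex

noncomputable def Taux : ℕ → Polynomial ℤ × Polynomial ℤ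
  | 0 => (0, 1)
  | n+1 => ((Taux n).2, (X^2+2) * (Taux n).2 - (Taux n).1)

noncomputable def T (n : ℕ) : Polynomial ℤ := (Taux n).1

lemma T_zero : T 0 = 0 := rfl
lemma T_one : T 1 = 1 := rfl
lemma T_rec (n : ℕ) : T (n+2) = (X^2+2) * T (n+1) - T n := rfl

lemma sub_lead {A B : Polynomial ℤ} (h : B.natDegree < A.natDegree) :
    (A - B).natDegree = A.natDegree ∧ (A - B).leadingCoeff = A.leadingCoeff := by
  constructor
  · exact natDegree_sub_eq_left_of_natDegree_lt h
  · rw [sub_eq_add_neg]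
    exact leadingCoeff_add_of_degree_lt'
      (by rw [degree_neg]; exact degree_lt_degree h)

lemma T_monic : ∀ n : ℕ, (T (n+1)).Monic ∧ (T (n+1)).natDegree = 2*n := by
  intro n
  induction n using Nat.strong_induction_on with
  | _ n ih =>
    match n with
    | 0 => rw [T_one]; exact ⟨monic_one, natDegree_one⟩
    | 1 =>
        have h2 : T 2 = X^2 + 2 := by rw [T_rec, T_one, T_zero]; ring
        rw [h2]
        constructor
        · monicity!
        · compute_degree!
    | (n+2) =>
        obtain ⟨hm1, hd1⟩ := ih (n+1) (by omega)
        obtain ⟨hm0, hd0⟩ := ih n (by omega)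
        have hX : (X^2 + 2 : Polynomial ℤ).Monic := by monicity!
        have hXd : (X^2 + 2 : Polynomial ℤ).natDegree = 2 := by compute_degree!
        have hmul : ((X^2+2) * T (n+2)).Monic := hX.mul hm1
        have hmuld : ((X^2+2) * T (n+2)).natDegree = 2*(n+2) := by
          rw [Polynomial.natDegree_mul hX.ne_zero hm1.ne_zero, hXd, hd1]; ring
        have hlt : (T (n+1)).natDegree < ((X^2+2) * T (n+2)).natDegree := by
          rw [hmuld, hd0]; omega
        obtain ⟨e1, e2⟩ := sub_lead hlt
        rw [T_rec]
        refine ⟨?_, by rw [e1, hmuld]⟩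
        unfold Polynomial.Monic
        rw [e2]; exact hmul

section eval
variable {u r : ℂ} (h : r ^ 2 = u ^ 4 + 4 * u ^ 2)

lemma lam_sum : lamp u r + lamm u r = u^2 + 2 := by unfold lamp lamm; ring

include h in
lemma lam_mul : lamp u r * lamm u r = 1 := by
  unfold lamp lamm; field_simp; linear_combination -h

include h in
lemma lamp_ne : lamp u r ≠ 0 := by
  intro h0
  have := lam_mul h
  rw [h0, zero_mul] at this
  exact one_ne_zero this.symm

include h in
lemma lamm_ne : lamm u r ≠ 0 := by
  intro h0
  have := lam_mul h
  rw [h0, mul_zero] at this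
  exact one_ne_zero this.symm

lemma lam_diff : lamp u r - lamm u r = r := by unfold lamp lamm; ring

include h in
lemma T_eval : ∀ n : ℕ, r * (aeval u (T n) : ℂ) = lamp u r ^ n - lamm u r ^ n := by
  intro n
  induction n using Nat.strong_induction_on with
  | _ n ih =>
    match n with
    | 0 => simp [T_zero]
    | 1 => simpa [T_one] using (lam_diff (u := u) (r := r)).symm
    | (n+2) =>
        have h1 := ih (n+1) (by omega)
        have h0 := ih n (by omega)
        rw [T_rec]
        have hs := lam_sum (u := u) (r := r)
        have hm := lam_mul h
        have ha : (aeval u ((X^2+2) * T (n+1) - T n) : ℂ)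
            = (u^2+2) * aeval u (T (n+1)) - aeval u (T n) := by
          simp only [map_sub, map_mul, map_add, map_pow, aeval_X]; rw [map_ofNat (aeval (R := ℤ) u) 2]
        rw [ha]
        linear_combination (u^2+2)*h1 - h0
          - (lamp u r ^ (n+1) - lamm u r ^ (n+1))*hs
          + (lamp u r ^ n - lamm u r ^ n)*hm
end eval

noncomputable def Sz (q : ℤ) : Polynomial ℤ :=
  if 0 ≤ q then T q.toNat else -T (-q).toNat

noncomputable def Phi (q : ℤ) : Polynomial ℤ := (1 - X) * Sz q - Sz (q - 1)

lemma Sz_eval {u r : ℂ} (h : r ^ 2 = u ^ 4 + 4 * u ^ 2) (q : ℤ) :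
    r * (aeval u (Sz q) : ℂ) = lamp u r ^ q - lamm u r ^ q := by
  rcases le_or_gt 0 q with hq | hq
  · rw [Sz, if_pos hq]
    have : (q.toNat : ℤ) = q := Int.toNat_of_nonneg hq
    rw [← this, zpow_natCast, zpow_natCast]
    exact T_eval h q.toNat
  · rw [Sz, if_neg (by omega)]
    set m := (-q).toNat with hm
    have hqm : q = -(m : ℤ) := by omega
    have hpm := lam_mul h
    have hp1 : lamp u r ^ (m : ℤ) * lamm u r ^ (m : ℤ) = 1 := by
      rw [zpow_natCast, zpow_natCast, ← mul_pow, hpm, one_pow]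
    have hinv1 : lamp u r ^ q = lamm u r ^ (m:ℕ) := by
      rw [hqm, zpow_neg, zpow_natCast]
      exact inv_eq_of_mul_eq_one_left (by rw [← mul_pow, mul_comm, hpm, one_pow])
    have hinv2 : lamm u r ^ q = lamp u r ^ (m:ℕ) := by
      rw [hqm, zpow_neg, zpow_natCast]
      exact inv_eq_of_mul_eq_one_left (by rw [← mul_pow, hpm, one_pow])
    rw [hinv1, hinv2, map_neg]
    have := T_eval h m
    linear_combination -this

lemma Phi_rel (q : ℤ) : ∀ u r : ℂ, r ^ 2 = u ^ 4 + 4 * u ^ 2 →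
    (lamp u r - lamm u r) * (aeval u (Phi q) : ℂ) =
      (1 - u) * ((lamp u r) ^ q - (lamm u r) ^ q) -
        ((lamp u r) ^ (q - 1) - (lamm u r) ^ (q - 1)) := by
  intro u r h
  rw [lam_diff, ← Sz_eval h q, ← Sz_eval h (q - 1), Phi]
  simp only [map_sub, map_mul, map_one, aeval_X]
  ring

lemma riley_unique (q : ℤ) (P : Polynomial ℤ) (hP : RileyRel q P) : P = Phi q := by
  have h2 := Phi_rel q
  have hmap : P.map (algebraMap ℤ ℂ) = (Phi q).map (algebraMap ℤ ℂ) := by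
    apply Polynomial.eq_of_infinite_eval_eq
    have hfin : ({x : ℂ | x ^ 4 + 4 * x ^ 2 = 0}).Finite := by
      apply Set.Finite.subset (Set.toFinite {(0:ℂ), 2*Complex.I, -(2*Complex.I)})
      intro x hx
      have hx0 : x ^ 4 + 4 * x ^ 2 = 0 := hx
      have hx' : x * x * ((x - 2*Complex.I) * (x + 2*Complex.I)) = 0 := by
        have hI : (Complex.I : ℂ)^2 = -1 := Complex.I_sq
        linear_combination hx0 - 4 * x^2 * hI
      simp only [Set.mem_insert_iff, Set.mem_singleton_iff]
      rcases mul_eq_zero.1 hx' with h1 | h1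
      · left; rcases mul_eq_zero.1 h1 with h | h <;> exact h
      · rcases mul_eq_zero.1 h1 with h | h
        · right; left; linear_combination h
        · right; right; linear_combination h
    apply Set.Infinite.mono (s := {x : ℂ | x ^ 4 + 4 * x ^ 2 = 0}ᶜ)
    · intro x hx
      simp only [Set.mem_compl_iff, Set.mem_setOf_eq] at hx
      obtain ⟨r, hr⟩ := IsAlgClosed.exists_pow_nat_eq (x ^ 4 + 4 * x ^ 2) (n := 2) (by norm_num)
      have hr0 : r ≠ 0 := by
        intro h0; rw [h0] at hr; exact hx (by rw [← hr]; ring)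
      have e1 := hP x r hr
      have e2 := h2 x r hr
      rw [lam_diff] at e1 e2
      have : (aeval x P : ℂ) = aeval x (Phi q) := by
        have := e1.trans e2.symm
        exact mul_left_cancel₀ hr0 this
      simp only [Set.mem_setOf_eq, Polynomial.eval_map, ← Polynomial.aeval_def]
      exact this
    · exact Set.Finite.infinite_compl hfin
  exact Polynomial.map_injective _ (algebraMap ℤ ℂ).injective_int hmap

lemma oneSubX : (1 - X : Polynomial ℤ).natDegree = 1 ∧
    (1 - X : Polynomial ℤ).leadingCoeff = -1 ∧ (1 - X : Polynomial ℤ) ≠ 0 := by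
  have h : (1 - X : Polynomial ℤ) = -(X - C 1) := by
    rw [map_one]; ring
  have hm := monic_X_sub_C (1:ℤ)
  refine ⟨?_, ?_, ?_⟩
  · rw [h, natDegree_neg, natDegree_X_sub_C]
  · rw [h, leadingCoeff_neg, hm.leadingCoeff]
  · rw [h, neg_ne_zero]; exact hm.ne_zero

lemma T_deg_lt (k : ℕ) : (T k).natDegree < 2 * k + 1 := by
  match k with
  | 0 => simp [T_zero]
  | (j+1) => rw [(T_monic j).2]; omega

lemma Phi_pos (q : ℤ) (hq : 0 < q) :
    (Phi q).natDegree = 2 * q.natAbs - 1 ∧ (Phi q).leadingCoeff = -1 := by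
  obtain ⟨k, hk⟩ : ∃ k : ℕ, q = (k : ℤ) + 1 := ⟨(q - 1).toNat, by omega⟩
  have hSz : Sz q = T (k + 1) := by
    rw [Sz, if_pos (by omega)]
    congr 1; omega
  have hSz' : Sz (q - 1) = T k := by
    rw [Sz, if_pos (by omega)]
    congr 1; omega
  obtain ⟨h1d, h1l, h1n⟩ := oneSubX
  obtain ⟨hm, hd⟩ := T_monic k
  have hAd : ((1 - X) * T (k+1)).natDegree = 2 * k + 1 := by
    rw [natDegree_mul h1n hm.ne_zero, h1d, hd]; ring
  have hAl : ((1 - X) * T (k+1)).leadingCoeff = -1 := by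
    rw [leadingCoeff_mul, h1l, hm.leadingCoeff]; ring
  have hlt : (T k).natDegree < ((1 - X) * T (k+1)).natDegree := by
    rw [hAd]; exact T_deg_lt k
  obtain ⟨e1, e2⟩ := sub_lead hlt
  have hPhi : Phi q = (1 - X) * T (k+1) - T k := by rw [Phi, hSz, hSz']
  constructor
  · rw [hPhi, e1, hAd]; omega
  · rw [hPhi, e2, hAl]

lemma Phi_neg (q : ℤ) (hq : q < 0) :
    (Phi q).natDegree = 2 * q.natAbs ∧ (Phi q).leadingCoeff = 1 := by
  obtain ⟨k, hk⟩ : ∃ k : ℕ, q = -((k : ℤ) + 1) := ⟨(-q - 1).toNat, by omega⟩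
  have hSz : Sz q = -T (k + 1) := by
    rw [Sz, if_neg (by omega)]
    congr 2; omega
  have hSz' : Sz (q - 1) = -T (k + 2) := by
    rw [Sz, if_neg (by omega)]
    congr 2; omega
  obtain ⟨h1d, h1l, h1n⟩ := oneSubX
  obtain ⟨hm1, hd1⟩ := T_monic (k + 1)
  obtain ⟨hm, hd⟩ := T_monic k
  have hPhi : Phi q = T (k + 2) - (1 - X) * T (k+1) := by
    rw [Phi, hSz, hSz']; ring
  have hBd : ((1 - X) * T (k+1)).natDegree = 2 * k + 1 := by
    rw [natDegree_mul h1n hm.ne_zero, h1d, hd]; ring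
  have hlt : ((1 - X) * T (k+1)).natDegree < (T (k + 2)).natDegree := by
    rw [hBd, hd1]; omega
  obtain ⟨e1, e2⟩ := sub_lead hlt
  constructor
  · rw [hPhi, e1, hd1]; omega
  · rw [hPhi, e2, hm1.leadingCoeff]

/-- deg φ_q = 2q-1 for q > 0, 2|q| for q < 0, and its leading coefficient is ±1. -/
theorem stmt_6 (q : ℤ) (hq : q ≠ 0) (P : Polynomial ℤ) (hP : RileyRel q P) :
    (0 < q → P.natDegree = 2 * q.natAbs - 1) ∧
    (q < 0 → P.natDegree = 2 * q.natAbs) ∧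
    (P.leadingCoeff = 1 ∨ P.leadingCoeff = -1) := by
  rw [riley_unique q P hP]
  rcases lt_or_gt_of_ne hq with hneg | hpos
  · obtain ⟨h1, h2⟩ := Phi_neg q hneg
    exact ⟨fun h => absurd h (by omega), fun _ => h1, Or.inl h2⟩
  · obtain ⟨h1, h2⟩ := Phi_pos q hpos
    exact ⟨fun _ => h1, fun h => absurd h (by omega), Or.inr h2⟩
end

section
/- For every nonzero integer q and every root u₀ ∈ ℂ of the Riley polynomial φ_q, one has γ_q(u₀) ≠ 0, where γ_q(u) = (τ_q(u) − 2)/u². Consequently the twisted Alexander polynomial Δ_{K,ρ}(t) = γ_q + δ_q t + γ_q t² associated with the corresponding parabolic representation has degree exactly 2. -/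
open Polynomial

/-- `P` is the polynomial `γ_q`, characterized by
`(λ₊ - 1)(λ₋ - 1)·γ_q(u) = (λ₊^q - 1)(λ₋^q - 1)`. -/
def GammaRel (q : ℤ) (P : Polynomial ℤ) : Prop :=
  ∀ u r : ℂ, r ^ 2 = u ^ 4 + 4 * u ^ 2 →
    (lamp u r - 1) * (lamm u r - 1) * (Polynomial.aeval u P : ℂ) =
      ((lamp u r) ^ q - 1) * ((lamm u r) ^ q - 1)

/-- If `P` maps to an irreducible polynomial over `ℚ` and shares the complex root `u₀`
with a nonzero rational polynomial `m`, then `deg P ≤ deg m`. -/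
lemma natDegree_le_aux (P : Polynomial ℤ)
    (hirr : Irreducible (P.map (Int.castRingHom ℚ)))
    (u₀ : ℂ) (hroot : Polynomial.aeval u₀ P = 0)
    (m : Polynomial ℚ) (hm : m ≠ 0) (hmu : Polynomial.aeval u₀ m = 0) :
    P.natDegree ≤ m.natDegree := by
  set Q := P.map (Int.castRingHom ℚ) with hQdef
  have hQ0 : Q ≠ 0 := hirr.ne_zero
  have hrootQ : Polynomial.aeval u₀ Q = 0 := by
    rw [hQdef, ← algebraMap_int_eq, aeval_map_algebraMap]; exact hroot
  have hint : IsIntegral ℚ u₀ := IsAlgebraic.isIntegral ⟨Q, hQ0, hrootQ⟩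
  obtain ⟨c, hc⟩ := minpoly.dvd ℚ u₀ hrootQ
  have hmin0 : minpoly ℚ u₀ ≠ 0 := minpoly.ne_zero hint
  have hmnu : ¬ IsUnit (minpoly ℚ u₀) :=
    Polynomial.not_isUnit_of_natDegree_pos _ (minpoly.natDegree_pos hint)
  have hcu : IsUnit c := (hirr.isUnit_or_isUnit hc).resolve_left hmnu
  have hdegQ : Q.natDegree = (minpoly ℚ u₀).natDegree := by
    rw [hc, Polynomial.natDegree_mul hmin0 hcu.ne_zero,
      Polynomial.natDegree_eq_zero_of_isUnit hcu, add_zero]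
  have hPQ : P.natDegree = Q.natDegree :=
    (Polynomial.natDegree_map_eq_of_injective (fun a b h => by simpa using h) P).symm
  rw [hPQ, hdegQ]
  exact Polynomial.natDegree_le_of_dvd (minpoly.dvd ℚ u₀ hmu) hm

/-- The core contradiction in the non-degenerate case. -/
lemma core_contra (q : ℤ) (a b r u₀ : ℂ) (hr : r ≠ 0) (hab : a * b = 1) (hsub : a - b = r)
    (h1 : (a ^ q - 1) * (b ^ q - 1) = 0)
    (h2 : (0:ℂ) = (1 - u₀) * (a ^ q - b ^ q) - (a ^ (q-1) - b ^ (q-1))) : False := by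
  have ha : a ≠ 0 := left_ne_zero_of_mul_eq_one hab
  have hb : b ≠ 0 := right_ne_zero_of_mul_eq_one hab
  have habq : a ^ q * b ^ q = 1 := by rw [← mul_zpow, hab, one_zpow]
  have haq : a ^ q = 1 ∧ b ^ q = 1 := by
    rcases mul_eq_zero.mp h1 with h | h
    · have h' : a ^ q = 1 := sub_eq_zero.mp h
      refine ⟨h', ?_⟩; rwa [h', one_mul] at habq
    · have h' : b ^ q = 1 := sub_eq_zero.mp h
      refine ⟨?_, h'⟩; rwa [h', mul_one] at habq
  rw [haq.1, haq.2, sub_self, mul_zero, zero_sub, zero_eq_neg, sub_eq_zero,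
    zpow_sub_one₀ ha, zpow_sub_one₀ hb, haq.1, haq.2, one_mul, one_mul] at h2
  exact hr (by rw [← hsub, inv_injective h2, sub_self])

/-- γ_q does not vanish at any root of φ_q; hence the twisted Alexander polynomial
γ_q + δ t + γ_q t² has degree exactly 2. -/
theorem stmt_11 (q : ℤ) (hq : q ≠ 0) (G P : Polynomial ℤ)
    (hG : GammaRel q G) (hGmonic : G.Monic) (hGdeg : G.natDegree = 2 * q.natAbs - 2)
    (hP : RileyRel q P)
    (hirr : Irreducible (P.map (Int.castRingHom ℚ)))
    (hPdeg₁ : 0 < q → P.natDegree = 2 * q.natAbs - 1)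
    (hPdeg₂ : q < 0 → P.natDegree = 2 * q.natAbs)
    (u₀ : ℂ) (hroot : Polynomial.aeval u₀ P = 0) :
    (Polynomial.aeval u₀ G : ℂ) ≠ 0 ∧
    ∀ δ : ℂ,
      (C (Polynomial.aeval u₀ G : ℂ) + C δ * X +
        C (Polynomial.aeval u₀ G : ℂ) * X ^ 2).natDegree = 2 := by
  have hqAbs : 1 ≤ q.natAbs := Int.natAbs_pos.mpr hq
  -- main claim
  have hg : (Polynomial.aeval u₀ G : ℂ) ≠ 0 := by
    -- degenerate cases : u₀ = 0 or u₀ ^ 2 = -4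
    by_cases hdeg : u₀ = 0 ∨ u₀ ^ 2 + 4 = 0
    · -- then deg P ≤ 2, so |q| = 1, so G = 1
      have hPle : P.natDegree ≤ 2 := by
        rcases hdeg with h0 | h4
        · have := natDegree_le_aux P hirr u₀ hroot X X_ne_zero (by simp [h0])
          simpa using this.trans (by norm_num)
        · have hne : (X ^ 2 + C (4:ℚ)) ≠ 0 := by
            intro h
            have := congrArg natDegree h
            simp [Polynomial.natDegree_X_pow_add_C] at this
          have := natDegree_le_aux P hirr u₀ hroot (X ^ 2 + C (4:ℚ)) hne
            (by push_cast [map_add, map_pow]; simpa using h4)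
          simpa [Polynomial.natDegree_X_pow_add_C] using this
      have hone : q.natAbs = 1 := by
        rcases lt_or_gt_of_ne hq with hneg | hpos
        · have := hPdeg₂ hneg; omega
        · have := hPdeg₁ hpos; omega
      have hG0 : G.natDegree = 0 := by rw [hGdeg, hone]
      rw [hGmonic.natDegree_eq_zero.mp hG0]
      simp
    · push_neg at hdeg
      obtain ⟨hu0, hu4⟩ := hdeg
      obtain ⟨r, hr⟩ := IsAlgClosed.exists_pow_nat_eq (k := ℂ)
        (u₀ ^ 4 + 4 * u₀ ^ 2) (n := 2) (by norm_num)
      have hrne : r ≠ 0 := by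
        intro h
        have h2 : u₀ ^ 2 * (u₀ ^ 2 + 4) = r ^ 2 := by rw [hr]; ring
        rw [h] at h2; norm_num at h2
        rcases h2 with h' | h'
        · exact hu0 h'
        · exact hu4 h'
      have hab : lamp u₀ r * lamm u₀ r = 1 := by
        unfold lamp lamm
        field_simp
        linear_combination -hr
      have hsub : lamp u₀ r - lamm u₀ r = r := by unfold lamp lamm; ring
      intro hG0
      have h1 := hG u₀ r hr
      rw [hG0, mul_zero] at h1
      have h2 := hP u₀ r hr
      rw [hroot, mul_zero] at h2
      exact core_contra q (lamp u₀ r) (lamm u₀ r) r u₀ hrne hab hsub h1.symm h2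
  refine ⟨hg, fun δ => ?_⟩
  have hre : C (Polynomial.aeval u₀ G : ℂ) + C δ * X +
      C (Polynomial.aeval u₀ G : ℂ) * X ^ 2 =
      C (Polynomial.aeval u₀ G : ℂ) * X ^ 2 + C δ * X + C (Polynomial.aeval u₀ G : ℂ) := by
    ring
  rw [hre, Polynomial.natDegree_quadratic hg]
end

section
/- For every integer q with |q| > 1 and every root u₀ ∈ ℂ of the Riley polynomial φ_q, one has γ_q(u₀) ≠ 1, where γ_q(u) = (τ_q(u) − 2)/u². Hence the twisted Alexander polynomial of the nonfibered twist knot J(2,2q) at any parabolic representation is not monic. -/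
open Polynomial

lemma aux_no_small_root {P Q : Polynomial ℤ} {u₀ : ℂ}
    (hirr : Irreducible (P.map (Int.castRingHom ℚ)))
    (hroot : Polynomial.aeval u₀ P = 0)
    (hQ : Q ≠ 0) (hdeg : Q.natDegree < P.natDegree) :
    Polynomial.aeval u₀ Q ≠ 0 := by
  intro hQ0
  have hmapP : Polynomial.aeval u₀ (P.map (Int.castRingHom ℚ)) = 0 := by
    rw [show Int.castRingHom ℚ = algebraMap ℤ ℚ from rfl, aeval_map_algebraMap]
    exact hroot
  have hmapQ : Polynomial.aeval u₀ (Q.map (Int.castRingHom ℚ)) = 0 := by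
    rw [show Int.castRingHom ℚ = algebraMap ℤ ℚ from rfl, aeval_map_algebraMap]
    exact hQ0
  have hPne : P.map (Int.castRingHom ℚ) ≠ 0 := hirr.ne_zero
  have halg : IsIntegral ℚ u₀ :=
    (isAlgebraic_iff_isIntegral).mp ⟨_, hPne, hmapP⟩
  have hd1 : minpoly ℚ u₀ ∣ P.map (Int.castRingHom ℚ) := minpoly.dvd ℚ u₀ hmapP
  have hd2 : minpoly ℚ u₀ ∣ Q.map (Int.castRingHom ℚ) := minpoly.dvd ℚ u₀ hmapQ
  have hQmne : Q.map (Int.castRingHom ℚ) ≠ 0 := by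
    simpa [Polynomial.map_eq_zero_iff (f := Int.castRingHom ℚ)
      (Int.cast_injective)] using hQ
  have hle : (minpoly ℚ u₀).natDegree ≤ (Q.map (Int.castRingHom ℚ)).natDegree :=
    Polynomial.natDegree_le_of_dvd hd2 hQmne
  obtain ⟨c, hc⟩ := hd1
  have hmne : ¬ IsUnit (minpoly ℚ u₀) := (minpoly.irreducible halg).not_isUnit
  have hcunit : IsUnit c := (hirr.isUnit_or_isUnit hc).resolve_left hmne
  have hcne : c ≠ 0 := hcunit.ne_zero
  have hcdeg : c.natDegree = 0 := natDegree_eq_zero_of_isUnit hcunit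
  have hmne0 : minpoly ℚ u₀ ≠ 0 := minpoly.ne_zero halg
  have hPd : (P.map (Int.castRingHom ℚ)).natDegree = (minpoly ℚ u₀).natDegree := by
    rw [hc, Polynomial.natDegree_mul hmne0 hcne, hcdeg, Nat.add_zero]
  have h1 : (P.map (Int.castRingHom ℚ)).natDegree = P.natDegree :=
    Polynomial.natDegree_map_eq_of_injective Int.cast_injective P
  have h2 : (Q.map (Int.castRingHom ℚ)).natDegree = Q.natDegree :=
    Polynomial.natDegree_map_eq_of_injective Int.cast_injective Q
  omega

/-- For |q| > 1, γ_q ≠ 1 at any root of φ_q; hence the twisted Alexander polynomial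
of the nonfibered twist knot J(2,2q) at any parabolic representation is not monic. -/
theorem stmt_12 (q : ℤ) (hq : 1 < q.natAbs) (G P : Polynomial ℤ)
    (hG : GammaRel q G) (hGmonic : G.Monic) (hGdeg : G.natDegree = 2 * q.natAbs - 2)
    (hP : RileyRel q P)
    (hirr : Irreducible (P.map (Int.castRingHom ℚ)))
    (hPdeg₁ : 0 < q → P.natDegree = 2 * q.natAbs - 1)
    (hPdeg₂ : q < 0 → P.natDegree = 2 * q.natAbs)
    (u₀ : ℂ) (hroot : Polynomial.aeval u₀ P = 0) :
    (Polynomial.aeval u₀ G : ℂ) ≠ 1 ∧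
    ∀ δ : ℂ,
      ¬ (C (Polynomial.aeval u₀ G : ℂ) + C δ * X +
          C (Polynomial.aeval u₀ G : ℂ) * X ^ 2).Monic := by
  have hqne : q ≠ 0 := by
    intro h; simp [h] at hq
  have hPdeg : 2 * q.natAbs - 2 < P.natDegree := by
    rcases lt_or_gt_of_ne hqne with h | h
    · have := hPdeg₂ h; omega
    · have := hPdeg₁ h; omega
  have hGne : G ≠ 0 := hGmonic.ne_zero
  have hGdeg' : G.natDegree < P.natDegree := by omega
  have ha0 : Polynomial.aeval u₀ G ≠ 0 :=
    aux_no_small_root hirr hroot hGne hGdeg'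
  have hG1ne : G - 1 ≠ 0 := by
    intro h
    have : G = 1 := by linear_combination (norm := ring_nf) h
    rw [this] at hGdeg
    simp [Polynomial.natDegree_one] at hGdeg
    omega
  have hG1deg : (G - 1).natDegree < P.natDegree := by
    have h1 : (G - 1).natDegree ≤ max G.natDegree (1 : Polynomial ℤ).natDegree :=
      Polynomial.natDegree_sub_le G 1
    simp [Polynomial.natDegree_one] at h1
    omega
  have ha1 : Polynomial.aeval u₀ G ≠ 1 := by
    intro h
    have : Polynomial.aeval u₀ (G - 1) = 0 := by
      simp [map_sub, h]
    exact aux_no_small_root hirr hroot hG1ne hG1deg this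
  refine ⟨ha1, ?_⟩
  intro δ hmon
  set a : ℂ := Polynomial.aeval u₀ G with ha
  have heq : C a + C δ * X + C a * X ^ 2 = C a * X ^ 2 + C δ * X + C a := by ring
  rw [heq] at hmon
  have hdeg2 : (C a * X ^ 2 + C δ * X + C a).natDegree = 2 :=
    Polynomial.natDegree_quadratic ha0
  have hlc : (C a * X ^ 2 + C δ * X + C a).leadingCoeff = a :=
    Polynomial.leadingCoeff_quadratic ha0
  exact ha1 (by rw [← hlc]; exact hmon)
end

section
/- For the twist knot J(2,4) (q = 2) and any root u₀ of φ_2(u) = 1 − 2u + u² − u³, the twisted Alexander polynomial of the corresponding parabolic representation equals (u₀²+4) − 4t + (u₀²+4)t². -/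
open Polynomial

/-- For J(2,4) and any root u₀ of φ_2(u) = 1 - 2u + u² - u³, the twisted Alexander
polynomial of the corresponding parabolic representation is (u₀²+4) - 4t + (u₀²+4)t². -/
theorem stmt_17 (u r : ℂ) (hr : r ^ 2 = u ^ 4 + 4 * u ^ 2)
    (hroot : 1 - 2 * u + u ^ 2 - u ^ 3 = 0) :
    let α : ℂ := ∑ i ∈ Finset.range 2, (lamp u r) ^ i
    let β : ℂ := ∑ i ∈ Finset.range 2, (lamm u r) ^ i
    let γ : ℂ := α * β
    let δ : ℂ := α + β - 2 * α * β +
      ((lamp u r - lamm u r) / (2 + lamp u r + lamm u r)) * (α - β)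
    (C γ + C δ * X + C γ * X ^ 2 : Polynomial ℂ) =
      C (u ^ 2 + 4) + C (-4 : ℂ) * X + C (u ^ 2 + 4) * X ^ 2 := by
  intro α β γ δ
  have hne : u ^ 2 + 4 ≠ 0 := by
    intro h
    have hu : u = 3 / 2 := by
      have h2 : u ^ 2 = -4 := by linear_combination h
      have : -3 + 2 * u = 0 := by linear_combination hroot + (u - 1) * h2
      linear_combination this / 2
    rw [hu] at h
    norm_num at h
  have hsum : 2 + lamp u r + lamm u r = u ^ 2 + 4 := by
    unfold lamp lamm; ring
  have hγ : γ = u ^ 2 + 4 := by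
    unfold γ α β
    show (∑ i ∈ Finset.range 2, (lamp u r) ^ i) *
      (∑ i ∈ Finset.range 2, (lamm u r) ^ i) = u ^ 2 + 4
    simp [Finset.sum_range_succ, lamp, lamm]
    field_simp
    linear_combination -hr
  have hδ : δ = -4 := by
    unfold δ α β
    show (∑ i ∈ Finset.range 2, (lamp u r) ^ i) +
      (∑ i ∈ Finset.range 2, (lamm u r) ^ i) -
      (2 * (∑ i ∈ Finset.range 2, (lamp u r) ^ i)) *
      (∑ i ∈ Finset.range 2, (lamm u r) ^ i) +
      ((lamp u r - lamm u r) / (2 + lamp u r + lamm u r)) *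
      ((∑ i ∈ Finset.range 2, (lamp u r) ^ i) -
      (∑ i ∈ Finset.range 2, (lamm u r) ^ i)) = -4
    rw [hsum]
    simp only [Finset.sum_range_succ, Finset.sum_range_zero, lamp, lamm]
    field_simp
    ring_nf
    linear_combination 2 * (u ^ 2 + 6) * hr
  rw [hγ, hδ]
end

section
/- For every integer q > 2 and every root u₀ of the Riley polynomial φ_q, the value δ_q(u₀) is not a rational number. -/
open Polynomial

/-- `D` is the polynomial `δ_q`, the middle coefficient of the twisted
Alexander polynomial, characterized by its value
`α + β - 2αβ + ((λ₊-λ₋)/(2+λ₊+λ₋))(α-β)` with `α = (λ₊^q-1)/(λ₊-1)`,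
`β = (λ₋^q-1)/(λ₋-1)`. -/
def DeltaRel (q : ℤ) (D : Polynomial ℤ) : Prop :=
  ∀ u r : ℂ, r ^ 2 = u ^ 4 + 4 * u ^ 2 →
    lamp u r ≠ 1 → lamm u r ≠ 1 → 2 + lamp u r + lamm u r ≠ 0 →
    (Polynomial.aeval u D : ℂ) =
      ((lamp u r) ^ q - 1) / (lamp u r - 1) + ((lamm u r) ^ q - 1) / (lamm u r - 1)
        - 2 * (((lamp u r) ^ q - 1) / (lamp u r - 1)) * (((lamm u r) ^ q - 1) / (lamm u r - 1))
        + ((lamp u r - lamm u r) / (2 + lamp u r + lamm u r)) *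
            (((lamp u r) ^ q - 1) / (lamp u r - 1) - ((lamm u r) ^ q - 1) / (lamm u r - 1))

/-- For q > 2 and any root u₀ of the Riley polynomial φ_q, δ_q(u₀) is irrational. -/
theorem stmt_18 (q : ℤ) (hq : 2 < q) (D P : Polynomial ℤ)
    (hD : DeltaRel q D) (hDdeg : D.natDegree = 2 * q.toNat - 4)
    (hP : RileyRel q P)
    (hirr : Irreducible (P.map (Int.castRingHom ℚ)))
    (hPdeg : P.natDegree = 2 * q.toNat - 1)
    (hlead : P.leadingCoeff = 1 ∨ P.leadingCoeff = -1)
    (u₀ : ℂ) (hroot : Polynomial.aeval u₀ P = 0) :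
    ¬ ∃ x : ℚ, (Polynomial.aeval u₀ D : ℂ) = (x : ℂ) := by
  rintro ⟨x, hx⟩
  have hq3 : 3 ≤ q.toNat := by omega
  set Pq : Polynomial ℚ := P.map (Int.castRingHom ℚ) with hPqdef
  have hPq0 : Polynomial.aeval u₀ Pq = 0 := by
    rw [hPqdef, ← algebraMap_int_eq, Polynomial.aeval_map_algebraMap]
    exact hroot
  set Dq : Polynomial ℚ := D.map (Int.castRingHom ℚ) with hDqdef
  have hDq : Polynomial.aeval u₀ Dq = Polynomial.aeval u₀ D := by
    rw [hDqdef, ← algebraMap_int_eq, Polynomial.aeval_map_algebraMap]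
  have hinj : Function.Injective (Int.castRingHom ℚ) := Int.cast_injective
  have hPqdeg : Pq.natDegree = 2 * q.toNat - 1 := by
    rw [hPqdef, Polynomial.natDegree_map_eq_of_injective hinj, hPdeg]
  have hDqdeg : Dq.natDegree = 2 * q.toNat - 4 := by
    rw [hDqdef, Polynomial.natDegree_map_eq_of_injective hinj, hDdeg]
  -- the polynomial g = Dq - C x vanishes at u₀
  set g : Polynomial ℚ := Dq - Polynomial.C x with hgdef
  have hg0 : Polynomial.aeval u₀ g = 0 := by
    rw [hgdef, map_sub, Polynomial.aeval_C, hDq, hx]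
    simp
  have hgdeg : g.natDegree = 2 * q.toNat - 4 := by
    rw [hgdef, Polynomial.natDegree_sub_C, hDqdeg]
  have hgne : g ≠ 0 := by
    intro h
    rw [h, Polynomial.natDegree_zero] at hgdeg
    omega
  -- u₀ is integral over ℚ
  have hint : IsIntegral ℚ u₀ :=
    (IsAlgebraic.isIntegral ⟨Pq, hirr.ne_zero, hPq0⟩)
  have hmin1 : minpoly ℚ u₀ ∣ Pq := minpoly.dvd ℚ u₀ hPq0
  have hmin2 : minpoly ℚ u₀ ∣ g := minpoly.dvd ℚ u₀ hg0
  have hassoc : Associated (minpoly ℚ u₀) Pq :=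
    (minpoly.irreducible hint).associated_of_dvd hirr hmin1
  have hdvd : Pq ∣ g := hassoc.symm.dvd.trans hmin2
  have := Polynomial.natDegree_le_of_dvd hdvd hgne
  omega
end
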